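/- For every integer p ≥ 1 and every k ∈ {1,2,3}, the smallest positive integer κ such that every vertex (extreme point) of the dilated polar polygon κ·Q̊_p^[k] lies in ℤ² equals (p+1)/2 if p is odd and p+1 if p is even. -/

import Mathlib

open Pointwise

/-- Q_p^[1] := conv({(1,−1),(p,1),(−1,0)}). -/
def Qpoly1 (p : ℤ) : Set (ℝ × ℝ) :=
  convexHull ℝ ({(1, -1), ((p : ℝ), 1), (-1, 0)} : Set (ℝ × ℝ))

/-- Q_p^[2] := conv({(1,−1),(p,1),(p−1,1),(−1,0)}). -/
def Qpoly2 (p : ℤ) : Set (ℝ × ℝ) :=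
  convexHull ℝ ({(1, -1), ((p : ℝ), 1), ((p : ℝ) - 1, 1), (-1, 0)} : Set (ℝ × ℝ))

/-- Q_p^[3] := conv({(1,−1),(p,1),(p−1,1),(−1,0),(0,−1)}). -/
def Qpoly3 (p : ℤ) : Set (ℝ × ℝ) :=
  convexHull ℝ ({(1, -1), ((p : ℝ), 1), ((p : ℝ) - 1, 1), (-1, 0), (0, -1)} : Set (ℝ × ℝ))

/-- Q_p^[k] for k ∈ {1,2,3}. -/
def Qpoly (p : ℤ) (k : ℕ) : Set (ℝ × ℝ) :=
  if k = 1 then Qpoly1 p else if k = 2 then Qpoly2 p else Qpoly3 p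

/-- The lattice ℤ² viewed inside ℝ². -/
def latticePts : Set (ℝ × ℝ) := {x | ∃ m n : ℤ, x = ((m : ℝ), (n : ℝ))}

/-- The polar polygon Q̊ := {y : ⟨y,x⟩ ≥ −1 for all x ∈ Q}. -/
def polar2 (Q : Set (ℝ × ℝ)) : Set (ℝ × ℝ) :=
  {y | ∀ x ∈ Q, -1 ≤ y.1 * x.1 + y.2 * x.2}

/-- ℓ_p := (p+1)/2 if p is odd, p+1 if p is even. -/
def ellp (p : ℤ) : ℤ := if Odd p then (p + 1) / 2 else p + 1

lemma convex_polar2 (Q : Set (ℝ × ℝ)) : Convex ℝ (polar2 Q) := by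
  intro y hy z hz a b ha hb hab x hx
  have h1 := hy x hx
  have h2 := hz x hx
  simp only [Prod.fst_add, Prod.snd_add, Prod.smul_fst, Prod.smul_snd, smul_eq_mul]
  nlinarith [mul_le_mul_of_nonneg_left h1 ha, mul_le_mul_of_nonneg_left h2 hb]

lemma polar2_convexHull (s : Set (ℝ × ℝ)) (y : ℝ × ℝ) :
    y ∈ polar2 (convexHull ℝ s) ↔ ∀ x ∈ s, -1 ≤ y.1 * x.1 + y.2 * x.2 := by
  constructor
  · intro h x hx; exact h x (subset_convexHull ℝ s hx)
  · intro h x hx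
    have hconv : Convex ℝ {x : ℝ × ℝ | -1 ≤ y.1 * x.1 + y.2 * x.2} := by
      intro u hu v hv a b ha hb hab
      simp only [Set.mem_setOf_eq] at *
      simp only [Prod.fst_add, Prod.snd_add, Prod.smul_fst, Prod.smul_snd, smul_eq_mul]
      nlinarith [mul_le_mul_of_nonneg_left hu ha, mul_le_mul_of_nonneg_left hv hb]
    exact convexHull_min h hconv hx

lemma combo3_mem {s : Set (ℝ × ℝ)} {A B C : ℝ × ℝ} (hA : A ∈ s) (hB : B ∈ s) (hC : C ∈ s)
    {a b c : ℝ} (ha : 0 ≤ a) (hb : 0 ≤ b) (hc : 0 ≤ c) (habc : a + b + c = 1) :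
    a • A + b • B + c • C ∈ convexHull ℝ s := by
  have := Finset.centerMass_mem_convexHull (Finset.univ : Finset (Fin 3))
    (w := ![a, b, c]) (z := ![A, B, C])
    (by intro i _; fin_cases i <;> simpa)
    (by simp [Fin.sum_univ_three, habc])
    (by intro i _; fin_cases i <;> simpa)
  simpa [Finset.centerMass, Fin.sum_univ_three, habc] using this
lemma polar_Q1 (q : ℝ) (hq : 1 ≤ q) :
    polar2 (convexHull ℝ ({(1, -1), (q, 1), (-1, 0)} : Set (ℝ × ℝ)))
      = convexHull ℝ ({(1, 2), (1, -q - 1), (-2 / (q + 1), (q - 1) / (q + 1))} : Set (ℝ × ℝ)) := by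
  have hq1 : (0:ℝ) < q + 1 := by linarith
  have hq3 : (0:ℝ) < q + 3 := by linarith
  apply Set.Subset.antisymm
  · intro y hy
    rw [polar2_convexHull] at hy
    have h1 := hy (1, -1) (by simp)
    have h2 := hy (q, 1) (by simp)
    have h3 := hy (-1, 0) (by simp)
    simp only at h1 h2 h3
    set a := (q * y.1 + y.2 + 1) / (q + 3) with ha_def
    set b := (y.1 - y.2 + 1) / (q + 3) with hb_def
    set c := (q + 1) * (1 - y.1) / (q + 3) with hc_def
    have hy' : y = a • ((1:ℝ), (2:ℝ)) + b • ((1:ℝ), -q - 1)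
        + c • (-2 / (q + 1), (q - 1) / (q + 1)) := by
      have : y = (y.1, y.2) := rfl
      rw [this]
      simp only [Prod.smul_mk, smul_eq_mul, Prod.mk_add_mk, Prod.mk.injEq, ha_def, hb_def, hc_def]
      constructor <;> (field_simp; ring)
    rw [hy']
    exact combo3_mem (by simp) (by simp) (by simp)
      (by apply div_nonneg _ hq3.le; nlinarith)
      (by apply div_nonneg _ hq3.le; nlinarith)
      (by apply div_nonneg _ hq3.le; nlinarith)
      (by rw [ha_def, hb_def, hc_def]; field_simp; ring)
  · apply convexHull_min _ (convex_polar2 _)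
    intro v hv
    rw [polar2_convexHull]
    have hinv : (0:ℝ) < (q+1)⁻¹ := inv_pos.2 hq1
    have hmul : (q+1) * (q+1)⁻¹ = 1 := mul_inv_cancel₀ (ne_of_gt hq1)
    rcases hv with rfl | rfl | rfl <;> intro x hx <;>
      rcases hx with rfl | rfl | rfl <;>
      simp only [div_eq_mul_inv] <;> nlinarith [hinv, hmul]
lemma polar_Q2 (q : ℝ) (hq : 1 ≤ q) :
    polar2 (convexHull ℝ ({(1, -1), (q, 1), (q - 1, 1), (-1, 0)} : Set (ℝ × ℝ)))
      = convexHull ℝ ({(1, 2), (1, -q), (0, -1), (-2 / (q + 1), (q - 1) / (q + 1))} :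
          Set (ℝ × ℝ)) := by
  have hq1 : (0:ℝ) < q + 1 := by linarith
  have hq2 : (0:ℝ) < q + 2 := by linarith
  have hq3 : (0:ℝ) < q + 3 := by linarith
  apply Set.Subset.antisymm
  · intro y hy
    rw [polar2_convexHull] at hy
    have h1 := hy (1, -1) (by simp)
    have h2 := hy (q, 1) (by simp)
    have h2' := hy (q - 1, 1) (by simp)
    have h3 := hy (-1, 0) (by simp)
    simp only at h1 h2 h2' h3
    rcases le_total 0 ((q^2 + 2*q - 1) * (y.1 - 1) + (q + 3) * (y.2 + q)) with hc | hc
    · -- triangle A, B', C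
      set a := ((q^2 + 2*q - 1) * (y.1 - 1) + (q + 3) * (y.2 + q)) / ((q + 2) * (q + 3)) with ha_def
      set b := (y.1 - y.2 + 1) / (q + 2) with hb_def
      set c := (q + 1) * (1 - y.1) / (q + 3) with hc_def
      have hy' : y = a • ((1:ℝ), (2:ℝ)) + b • ((1:ℝ), -q)
          + c • (-2 / (q + 1), (q - 1) / (q + 1)) := by
        have : y = (y.1, y.2) := rfl
        rw [this]
        simp only [Prod.smul_mk, smul_eq_mul, Prod.mk_add_mk, Prod.mk.injEq, ha_def, hb_def, hc_def]
        constructor <;> (field_simp; ring)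
      rw [hy']
      exact combo3_mem (by simp) (by simp) (by simp)
        (by apply div_nonneg hc (by positivity))
        (by apply div_nonneg _ hq2.le; nlinarith)
        (by apply div_nonneg _ hq3.le; nlinarith)
        (by rw [ha_def, hb_def, hc_def]; field_simp; ring)
    · -- triangle B', D, C
      set b := q * y.1 + y.2 + 1 with hb_def
      set d := -((q^2 + 2*q - 1) * (y.1 - 1) + (q + 3) * (y.2 + q)) / 2 with hd_def
      set c := (q + 1) * ((q - 1) * y.1 + y.2 + 1) / 2 with hc_def
      have hy' : y = b • ((1:ℝ), -q) + d • ((0:ℝ), (-1:ℝ))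
          + c • (-2 / (q + 1), (q - 1) / (q + 1)) := by
        have : y = (y.1, y.2) := rfl
        rw [this]
        simp only [Prod.smul_mk, smul_eq_mul, Prod.mk_add_mk, Prod.mk.injEq, hb_def, hd_def, hc_def]
        constructor <;> (field_simp; ring)
      rw [hy']
      exact combo3_mem (by simp) (by simp) (by simp)
        (by rw [hb_def]; nlinarith)
        (by apply div_nonneg _ (by norm_num); linarith)
        (by apply div_nonneg _ (by norm_num); nlinarith)
        (by rw [hb_def, hd_def, hc_def]; field_simp; ring)
  · apply convexHull_min _ (convex_polar2 _)
    intro v hv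
    rw [polar2_convexHull]
    have hinv : (0:ℝ) < (q+1)⁻¹ := inv_pos.2 hq1
    have hmul : (q+1) * (q+1)⁻¹ = 1 := mul_inv_cancel₀ (ne_of_gt hq1)
    rcases hv with rfl | rfl | rfl | rfl <;> intro x hx <;>
      rcases hx with rfl | rfl | rfl | rfl <;>
      simp only [div_eq_mul_inv] <;> nlinarith [hinv, hmul]
set_option maxHeartbeats 1000000 in
lemma polar_Q3 (q : ℝ) (hq : 1 ≤ q) :
    polar2 (convexHull ℝ ({(1, -1), (q, 1), (q - 1, 1), (-1, 0), (0, -1)} : Set (ℝ × ℝ)))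
      = convexHull ℝ ({(1, 1), (0, 1), (1, -q), (0, -1), (-2 / (q + 1), (q - 1) / (q + 1))} :
          Set (ℝ × ℝ)) := by
  have hq1 : (0:ℝ) < q + 1 := by linarith
  have hq2 : (0:ℝ) < q + 2 := by linarith
  have hq4 : (0:ℝ) < 2 * q + 4 := by linarith
  apply Set.Subset.antisymm
  · intro y hy
    rw [polar2_convexHull] at hy
    have h1 := hy (1, -1) (by simp)
    have h2 := hy (q, 1) (by simp)
    have h2' := hy (q - 1, 1) (by simp)
    have h3 := hy (-1, 0) (by simp)
    have h4 := hy (0, -1) (by simp)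
    simp only at h1 h2 h2' h3 h4
    rcases le_total 0 ((q + 1) * y.1 + y.2 - 1) with hc2 | hc2
    · -- triangle B', E, F
      set b := (1 - y.2) / (q + 1) with hb_def
      set e := ((q + 1) * y.1 + y.2 - 1) / (q + 1) with he_def
      set f := 1 - y.1 with hf_def
      have hy' : y = b • ((1:ℝ), -q) + e • ((1:ℝ), (1:ℝ)) + f • ((0:ℝ), (1:ℝ)) := by
        have : y = (y.1, y.2) := rfl
        rw [this]
        simp only [Prod.smul_mk, smul_eq_mul, Prod.mk_add_mk, Prod.mk.injEq, hb_def, he_def, hf_def]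
        constructor <;> (field_simp; try ring)
      rw [hy']
      exact combo3_mem (by simp) (by simp) (by simp)
        (by apply div_nonneg _ hq1.le; linarith)
        (by apply div_nonneg hc2 hq1.le)
        (by rw [hf_def]; linarith)
        (by rw [hb_def, he_def, hf_def]; field_simp; try ring)
    · rcases le_total 0 ((q^2 + 2*q - 1) * (y.1 - 1) + (q + 3) * (y.2 + q)) with hch | hch
      · -- triangle B', F, C
        set b := (y.1 - y.2 + 1) / (q + 2) with hb_def
        set f := ((q^2 + 2*q - 1) * (y.1 - 1) + (q + 3) * (y.2 + q)) / (2 * q + 4) with hf_def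
        set c := -((q + 1) * y.1 + y.2 - 1) * (q + 1) / (2 * q + 4) with hc_def
        have hy' : y = b • ((1:ℝ), -q) + f • ((0:ℝ), (1:ℝ))
            + c • (-2 / (q + 1), (q - 1) / (q + 1)) := by
          have : y = (y.1, y.2) := rfl
          rw [this]
          simp only [Prod.smul_mk, smul_eq_mul, Prod.mk_add_mk, Prod.mk.injEq, hb_def, hf_def,
            hc_def]
          constructor <;> (field_simp; try ring)
        rw [hy']
        exact combo3_mem (by simp) (by simp) (by simp)
          (by apply div_nonneg _ hq2.le; linarith)
          (by apply div_nonneg hch hq4.le)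
          (by apply div_nonneg _ hq4.le; nlinarith)
          (by rw [hb_def, hf_def, hc_def]; field_simp; ring)
      · -- triangle B', D, C
        set b := q * y.1 + y.2 + 1 with hb_def
        set d := -((q^2 + 2*q - 1) * (y.1 - 1) + (q + 3) * (y.2 + q)) / 2 with hd_def
        set c := (q + 1) * ((q - 1) * y.1 + y.2 + 1) / 2 with hc_def
        have hy' : y = b • ((1:ℝ), -q) + d • ((0:ℝ), (-1:ℝ))
            + c • (-2 / (q + 1), (q - 1) / (q + 1)) := by
          have : y = (y.1, y.2) := rfl
          rw [this]
          simp only [Prod.smul_mk, smul_eq_mul, Prod.mk_add_mk, Prod.mk.injEq, hb_def, hd_def,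
            hc_def]
          constructor <;> (field_simp; try ring)
        rw [hy']
        exact combo3_mem (by simp) (by simp) (by simp)
          (by rw [hb_def]; nlinarith)
          (by apply div_nonneg _ (by norm_num); linarith)
          (by apply div_nonneg _ (by norm_num); nlinarith)
          (by rw [hb_def, hd_def, hc_def]; field_simp; ring)
  · apply convexHull_min _ (convex_polar2 _)
    intro v hv
    rw [polar2_convexHull]
    have hinv : (0:ℝ) < (q+1)⁻¹ := inv_pos.2 hq1
    have hmul : (q+1) * (q+1)⁻¹ = 1 := mul_inv_cancel₀ (ne_of_gt hq1)
    rcases hv with rfl | rfl | rfl | rfl | rfl <;> intro x hx <;>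
      rcases hx with rfl | rfl | rfl | rfl | rfl <;>
      simp only [div_eq_mul_inv] <;> norm_num <;> nlinarith [hinv, hmul]
lemma main_aux (p : ℤ) (hp : 1 ≤ p) (Q V : Set (ℝ × ℝ))
    (hPk : polar2 Q = convexHull ℝ V)
    (hgen1 : ((1 : ℝ), (-1 : ℝ)) ∈ Q) (hgen2 : (((p : ℝ)), (1 : ℝ)) ∈ Q)
    (hC : ((-2 / ((p : ℝ) + 1), ((p : ℝ) - 1) / ((p : ℝ) + 1)) : ℝ × ℝ) ∈ V)
    (hVlat : ∀ v ∈ V, ((if Odd p then (p + 1) / 2 else p + 1 : ℤ) : ℝ) • v ∈ latticePts) :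
    IsLeast {κ : ℤ | 0 < κ ∧
        ∀ z ∈ Set.extremePoints ℝ ((κ : ℝ) • polar2 Q), z ∈ latticePts}
      (if Odd p then (p + 1) / 2 else p + 1) := by
  have hpR : (0:ℝ) < (p:ℝ) + 1 := by
    have : (1:ℝ) ≤ (p:ℝ) := by exact_mod_cast hp
    linarith
  have hpne : ((p:ℝ) + 1) ≠ 0 := ne_of_gt hpR
  set L : ℤ := if Odd p then (p + 1) / 2 else p + 1 with hLdef
  have hLpos : 0 < L := by
    by_cases ho : Odd p
    · obtain ⟨m, hm⟩ := id ho; simp only [hLdef, if_pos ho]; omega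
    · simp only [hLdef, if_neg ho]; omega
  constructor
  · refine ⟨hLpos, ?_⟩
    intro z hz
    rw [hPk, ← convexHull_smul] at hz
    have hz' := extremePoints_convexHull_subset hz
    obtain ⟨v, hv, rfl⟩ := hz'
    exact hVlat v hv
  · rintro κ ⟨hκpos, hκlat⟩
    have hκR : (0:ℝ) < (κ:ℝ) := by exact_mod_cast hκpos
    set C : ℝ × ℝ := (-2 / ((p : ℝ) + 1), ((p : ℝ) - 1) / ((p : ℝ) + 1)) with hCdef
    have hCP : C ∈ polar2 Q := by rw [hPk]; exact subset_convexHull ℝ V hC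
    have key : ∀ w : ℝ × ℝ, w ∈ polar2 Q → ((p:ℝ) + 1) * w.1 + 2 = 0 → w = C := by
      intro w hw hw0
      have hg1 := hw _ hgen1
      have hg2 := hw _ hgen2
      norm_num at hg1 hg2
      have hA : w.1 - w.2 + 1 = 0 := by linarith
      have hA2 : ((p:ℝ) + 1) * (w.1 - w.2 + 1) = 0 := by rw [hA, mul_zero]
      have hB : w = (w.1, w.2) := rfl
      rw [hB, hCdef, Prod.mk.injEq]
      constructor
      · field_simp
        linarith [hA2]
      · field_simp
        linarith [hA2]
    have hC1 : ((p:ℝ) + 1) * C.1 + 2 = 0 := by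
      rw [hCdef]
      field_simp
      ring
    have hext : (κ:ℝ) • C ∈ Set.extremePoints ℝ ((κ:ℝ) • polar2 Q) := by
      refine ⟨Set.smul_mem_smul_set hCP, ?_⟩
      rintro y ⟨y', hy', rfl⟩ z ⟨z', hz', rfl⟩ hseg
      obtain ⟨a, b, ha, hb, hab, habeq⟩ := hseg
      have hfst := congrArg Prod.fst habeq
      simp only [Prod.fst_add, Prod.smul_fst, smul_eq_mul] at hfst
      have hFy : 0 ≤ ((p:ℝ) + 1) * y'.1 + 2 := by
        have hg1 := hy' _ hgen1
        have hg2 := hy' _ hgen2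
        norm_num at hg1 hg2
        linarith
      have hFz : 0 ≤ ((p:ℝ) + 1) * z'.1 + 2 := by
        have hg1 := hz' _ hgen1
        have hg2 := hz' _ hgen2
        norm_num at hg1 hg2
        linarith
      have hκne : (κ:ℝ) ≠ 0 := ne_of_gt hκR
      have hcomb : a * y'.1 + b * z'.1 = C.1 := by
        apply mul_left_cancel₀ hκne
        linear_combination hfst
      have hsum0 : a * (((p:ℝ) + 1) * y'.1 + 2) + b * (((p:ℝ) + 1) * z'.1 + 2) = 0 := by
        linear_combination ((p:ℝ) + 1) * hcomb + 2 * hab + hC1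
      have h3 : a * (((p:ℝ) + 1) * y'.1 + 2) = 0 := by
        have h1 : 0 ≤ a * (((p:ℝ) + 1) * y'.1 + 2) := mul_nonneg ha.le hFy
        have h2 : 0 ≤ b * (((p:ℝ) + 1) * z'.1 + 2) := mul_nonneg hb.le hFz
        linarith
      have h4 : b * (((p:ℝ) + 1) * z'.1 + 2) = 0 := by
        have h1 : 0 ≤ a * (((p:ℝ) + 1) * y'.1 + 2) := mul_nonneg ha.le hFy
        linarith
      have hy0 := (mul_eq_zero.1 h3).resolve_left (ne_of_gt ha)
      have hz0 := (mul_eq_zero.1 h4).resolve_left (ne_of_gt hb)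
      rw [key y' hy' hy0]
    obtain ⟨m, n, hmn⟩ := hκlat _ hext
    have hfst := congrArg Prod.fst hmn
    simp only [Prod.smul_fst, smul_eq_mul, hCdef] at hfst
    have hR : (-2:ℝ) * κ = m * ((p:ℝ) + 1) := by
      field_simp at hfst
      linarith
    have hZ : (-2) * κ = m * (p + 1) := by exact_mod_cast hR
    have hdvd : 2 * κ = (p + 1) * (-m) := by linarith
    show L ≤ κ
    rcases Int.even_or_odd p with ⟨m', hm'⟩ | ⟨m', hm'⟩
    · have hnotodd : ¬ Odd p := by
        intro hoo; obtain ⟨a, ha⟩ := hoo; omega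
      have hLv : L = p + 1 := by rw [hLdef, if_neg hnotodd]
      rcases Int.even_or_odd (-m) with ⟨u, hu⟩ | ⟨u, hu⟩
      · have hκeq : κ = (p + 1) * u := by
          have h := hdvd
          rw [hu] at h
          linarith
        rw [hLv]
        exact Int.le_of_dvd hκpos ⟨u, hκeq⟩
      · exfalso
        have hodd : Odd ((p + 1) * (-m)) := Odd.mul ⟨m', by omega⟩ ⟨u, by omega⟩
        rw [← hdvd] at hodd
        obtain ⟨w, hw⟩ := hodd
        omega
    · have hLv : L = m' + 1 := by
        rw [hLdef, if_pos ⟨m', hm'⟩]; omega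
      have hκeq : κ = (m' + 1) * (-m) := by
        have h := hdvd
        rw [hm'] at h
        linarith
      rw [hLv]
      exact Int.le_of_dvd hκpos ⟨-m, hκeq⟩

lemma lat_pair (l a b : ℤ) {v : ℝ × ℝ} (h1 : v.1 = (a : ℝ)) (h2 : v.2 = (b : ℝ)) :
    (l : ℝ) • v ∈ latticePts := by
  refine ⟨l * a, l * b, ?_⟩
  have hv : v = (v.1, v.2) := rfl
  rw [hv, h1, h2]
  simp only [Prod.smul_mk, smul_eq_mul, Prod.mk.injEq]
  constructor <;> push_cast <;> ring

/-- the smallest positive integer κ such that every vertex of κ·Q̊_p^[k] is a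
lattice point equals (p+1)/2 for p odd and p+1 for p even. -/
theorem stmt9 (p : ℤ) (hp : 1 ≤ p) (k : ℕ) (hk : k ∈ ({1, 2, 3} : Set ℕ)) :
    IsLeast {κ : ℤ | 0 < κ ∧
        ∀ z ∈ Set.extremePoints ℝ ((κ : ℝ) • polar2 (Qpoly p k)), z ∈ latticePts}
      (if Odd p then (p + 1) / 2 else p + 1) := by
  have hq : (1 : ℝ) ≤ (p : ℝ) := by exact_mod_cast hp
  have hpR : (0 : ℝ) < (p : ℝ) + 1 := by linarith
  have hpne : ((p : ℝ) + 1) ≠ 0 := ne_of_gt hpR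
  obtain ⟨t, ht⟩ : ∃ t : ℤ, 2 * (if Odd p then (p + 1) / 2 else p + 1) = (p + 1) * t := by
    by_cases ho : Odd p
    · obtain ⟨m, hm⟩ := id ho
      exact ⟨1, by rw [if_pos ho]; omega⟩
    · exact ⟨2, by rw [if_neg ho]; ring⟩
  have htR : 2 * ((if Odd p then (p + 1) / 2 else p + 1 : ℤ) : ℝ) = ((p : ℝ) + 1) * (t : ℝ) := by
    exact_mod_cast congrArg (fun x : ℤ => (x : ℝ)) ht
  have hClat : ((if Odd p then (p + 1) / 2 else p + 1 : ℤ) : ℝ) •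
      ((-2 / ((p : ℝ) + 1), ((p : ℝ) - 1) / ((p : ℝ) + 1)) : ℝ × ℝ) ∈ latticePts := by
    refine ⟨-t, (if Odd p then (p + 1) / 2 else p + 1) - t, ?_⟩
    simp only [Prod.smul_mk, smul_eq_mul, Prod.mk.injEq, Int.cast_sub, Int.cast_neg]
    generalize ((if Odd p then (p + 1) / 2 else p + 1 : ℤ) : ℝ) = LR at htR ⊢
    constructor
    · field_simp
      linarith
    · field_simp
      linarith
  simp only [Set.mem_insert_iff, Set.mem_singleton_iff] at hk
  rcases hk with rfl | rfl | rfl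
  · have e1 : Qpoly p 1 = convexHull ℝ ({(1, -1), ((p : ℝ), 1), (-1, 0)} : Set (ℝ × ℝ)) := rfl
    rw [e1]
    refine main_aux p hp _ _ (polar_Q1 (p : ℝ) hq)
      (subset_convexHull ℝ _ (by simp)) (subset_convexHull ℝ _ (by simp)) (by simp) ?_
    intro v hv
    rcases hv with rfl | rfl | rfl
    · exact lat_pair _ 1 2 (by norm_num) (by norm_num)
    · exact lat_pair _ 1 (-p - 1) (by norm_num) (by push_cast; ring)
    · exact hClat
  · have e2 : Qpoly p 2
        = convexHull ℝ ({(1, -1), ((p : ℝ), 1), ((p : ℝ) - 1, 1), (-1, 0)} : Set (ℝ × ℝ)) := rfl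
    rw [e2]
    refine main_aux p hp _ _ (polar_Q2 (p : ℝ) hq)
      (subset_convexHull ℝ _ (by simp)) (subset_convexHull ℝ _ (by simp)) (by simp) ?_
    intro v hv
    rcases hv with rfl | rfl | rfl | rfl
    · exact lat_pair _ 1 2 (by norm_num) (by norm_num)
    · exact lat_pair _ 1 (-p) (by norm_num) (by push_cast; ring)
    · exact lat_pair _ 0 (-1) (by norm_num) (by norm_num)
    · exact hClat
  · have e3 : Qpoly p 3
        = convexHull ℝ
          ({(1, -1), ((p : ℝ), 1), ((p : ℝ) - 1, 1), (-1, 0), (0, -1)} : Set (ℝ × ℝ)) := rfl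
    rw [e3]
    refine main_aux p hp _ _ (polar_Q3 (p : ℝ) hq)
      (subset_convexHull ℝ _ (by simp)) (subset_convexHull ℝ _ (by simp)) (by simp) ?_
    intro v hv
    rcases hv with rfl | rfl | rfl | rfl | rfl
    · exact lat_pair _ 1 1 (by norm_num) (by norm_num)
    · exact lat_pair _ 0 1 (by norm_num) (by norm_num)
    · exact lat_pair _ 1 (-p) (by norm_num) (by push_cast; ring)
    · exact lat_pair _ 0 (-1) (by norm_num) (by norm_num)
    · exact hClat
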